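/- Let A ⊆ ℕ be a translate of an SIP set, i.e. there exist u ∈ ℤ and an infinite B ⊆ ℕ with (u + SIP(B))_+ ⊆ A. Then for every odd positive integer K, the map t ↦ z(t) mod K is surjective from A onto ℤ/Kℤ; that is, for every residue c modulo K there exists t ∈ A with z(t) ≡ c (mod K). -/

import Mathlib

/-- `IP A`: the set of all finite sums of distinct elements of `A ⊆ ℤ`
(sums over finite subsets `F ⊆ A`, with the empty sum equal to `0`). -/
def IP (A : Set ℤ) : Set ℤ :=
  {t | ∃ F : Finset ℤ, ↑F ⊆ A ∧ t = ∑ x ∈ F, x}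

/-- `SIP A = IP A - IP A`. -/
def SIP (A : Set ℤ) : Set ℤ :=
  {d | ∃ s ∈ IP A, ∃ t ∈ IP A, d = s - t}

/-- The positive part `S_+ = S ∩ ℕ` of a set of integers. -/
def posPart (S : Set ℤ) : Set ℤ := S ∩ {n : ℤ | 0 < n}

/-- The `n`-th digit (0-indexed: `btDigit n t = ε_{n+1}(t)`) of the balanced
ternary expansion `t = Σ_{n ∈ ℕ} ε_n(t)·3^{n-1}`, with digits in `{-1,0,1}`. -/
def btDigit : ℕ → ℤ → ℤ
  | 0, t => (t + 1) % 3 - 1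
  | n + 1, t => btDigit n ((t - ((t + 1) % 3 - 1)) / 3)

/-- The set of indices (0-indexed) of the nonzero balanced ternary digits of `t`. -/
def btIndices (t : ℤ) : Set ℕ := {n | btDigit n t ≠ 0}

/-- The last index `j_{r(t)}(t)` of `t` (junk value for `t = 0`). -/
noncomputable def jmax (t : ℤ) : ℕ := sSup (btIndices t)

/-- The successor of the index `i` in the list of indices of `t`: the least
index of `t` that is larger than `i`. -/
noncomputable def nextIdx (t : ℤ) (i : ℕ) : ℕ := sInf {j ∈ btIndices t | i < j}

/-- The sign change count `z(t)`: the number of consecutive pairs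
`j_i(t) < j_{i+1}(t)` of indices of `t` whose digits differ. -/
noncomputable def signChanges (t : ℤ) : ℕ :=
  {i ∈ btIndices t | i < jmax t ∧ btDigit i t ≠ btDigit (nextIdx t i) t}.ncard


namespace SC

/-- balanced shift -/
def S (t : ℤ) : ℤ := (t - ((t + 1) % 3 - 1)) / 3

lemma btDigit_zero_fst (t : ℤ) : btDigit 0 t = (t + 1) % 3 - 1 := rfl

lemma btDigit_succ' (n : ℕ) (t : ℤ) : btDigit (n+1) t = btDigit n (S t) := rfl

lemma S_eq (t : ℤ) : S t = (t + 1) / 3 := by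
  unfold S; omega

lemma eq_three_S (t : ℤ) : t = 3 * S t + btDigit 0 t := by
  rw [S_eq, btDigit_zero_fst]; omega

lemma btDigit_iter (n : ℕ) (t : ℤ) : btDigit n t = btDigit 0 (S^[n] t) := by
  induction n generalizing t with
  | zero => rfl
  | succ n ih => rw [btDigit_succ', ih, Function.iterate_succ_apply]

lemma btDigit_iter_add (m n : ℕ) (t : ℤ) : btDigit (m + n) t = btDigit n (S^[m] t) := by
  induction m generalizing t with
  | zero => simp
  | succ m ih =>
      have : m + 1 + n = (m + n) + 1 := by omega
      rw [this, btDigit_succ', ih, Function.iterate_succ_apply]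

lemma btDigit0_range (t : ℤ) : -1 ≤ btDigit 0 t ∧ btDigit 0 t ≤ 1 := by
  rw [btDigit_zero_fst]; omega

lemma btDigit_range (n : ℕ) (t : ℤ) : -1 ≤ btDigit n t ∧ btDigit n t ≤ 1 := by
  rw [btDigit_iter]; exact btDigit0_range _

lemma S_zero : S 0 = 0 := by unfold S; norm_num

lemma S_iter_zero (n : ℕ) : S^[n] 0 = 0 := Function.iterate_fixed S_zero n

lemma btDigit_of_zero (n : ℕ) : btDigit n 0 = 0 := by
  rw [btDigit_iter, S_iter_zero]; rfl

lemma S_add_mul (u M : ℤ) : S (u + 3 * M) = S u + M := by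
  unfold S; omega

lemma btDigit0_add_mul (u M : ℤ) : btDigit 0 (u + 3 * M) = btDigit 0 u := by
  rw [btDigit_zero_fst, btDigit_zero_fst]; omega

lemma S_iter_add_pow (n : ℕ) (u M : ℤ) : S^[n] (u + 3 ^ n * M) = S^[n] u + M := by
  induction n generalizing M with
  | zero => simp
  | succ n ih =>
      have h1 : u + 3 ^ (n+1) * M = u + 3 ^ n * (3 * M) := by ring
      rw [h1, Function.iterate_succ_apply', Function.iterate_succ_apply', ih (3 * M),
        S_add_mul]

lemma btDigit_add_pow_lt {n N : ℕ} (h : n < N) (u M : ℤ) :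
    btDigit n (u + 3 ^ N * M) = btDigit n u := by
  obtain ⟨k, hk⟩ : ∃ k, N = n + k + 1 := ⟨N - n - 1, by omega⟩
  have h1 : u + 3 ^ N * M = u + 3 ^ n * (3 ^ k * M * 3) := by
    rw [hk]; ring
  rw [h1, btDigit_iter, S_iter_add_pow, btDigit_zero_fst, btDigit_iter,
    btDigit_zero_fst]
  omega

lemma btDigit_add_pow_ge (k N : ℕ) (u M : ℤ) (hu : S^[N] u = 0) :
    btDigit (N + k) (u + 3 ^ N * M) = btDigit k M := by
  rw [btDigit_iter_add, S_iter_add_pow, hu, zero_add]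

lemma abs_S_le (t : ℤ) : 6 * |S t| ≤ 2 * |t| + 2 := by
  have h1 : 3 * S t = t - btDigit 0 t := by have := eq_three_S t; omega
  have h2 : |3 * S t| ≤ |t| + |btDigit 0 t| := by
    rw [h1, sub_eq_add_neg]
    exact (abs_add_le _ _).trans (by rw [abs_neg])
  have h3 := btDigit0_range t
  have h4 : |btDigit 0 t| ≤ 1 := abs_le.2 ⟨h3.1, h3.2⟩
  have h5 : |3 * S t| = 3 * |S t| := by rw [abs_mul]; norm_num
  omega

lemma S_iter_eq_zero {t : ℤ} {n : ℕ} (h : 2 * |t| + 1 ≤ 3 ^ n) : S^[n] t = 0 := by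
  induction n generalizing t with
  | zero =>
      simp only [pow_zero] at h
      have h' : |t| ≤ 0 := by omega
      have : t = 0 := abs_nonpos_iff.mp h'
      simp [this]
  | succ n ih =>
      rw [Function.iterate_succ_apply]
      apply ih
      have h1 := abs_S_le t
      obtain ⟨q, hq⟩ : ∃ q : ℤ, (3:ℤ) ^ n = 2 * q + 1 := (Odd.pow ⟨1, by norm_num⟩ : Odd ((3:ℤ)^n))
      have h2 : (3:ℤ) ^ (n+1) = 6 * q + 3 := by rw [pow_succ, hq]; ring
      omega

lemma btDigit_eq_zero_of_big {t : ℤ} {n : ℕ} (h : 2 * |t| + 1 ≤ 3 ^ n) {m : ℕ}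
    (hm : n ≤ m) : btDigit m t = 0 := by
  obtain ⟨k, rfl⟩ : ∃ k, m = n + k := ⟨m - n, by omega⟩
  rw [btDigit_iter_add, S_iter_eq_zero h, btDigit_of_zero]

lemma exists_pow_big (t : ℤ) (N₀ : ℕ) : ∃ n, N₀ ≤ n ∧ 2 * |t| + 1 ≤ 3 ^ n := by
  refine ⟨max N₀ (2 * |t| + 1).toNat, le_max_left _ _, ?_⟩
  have h1 : (2 * |t| + 1).toNat ≤ max N₀ (2 * |t| + 1).toNat := le_max_right _ _
  have h2 : ∀ k : ℕ, (k : ℤ) ≤ 3 ^ k := fun k =>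
    mod_cast (Nat.lt_pow_self (n := k) (a := 3) (by norm_num)).le
  have h3 := h2 (max N₀ (2 * |t| + 1).toNat)
  have h4 : (2 * |t| + 1 : ℤ) ≤ (max N₀ (2 * |t| + 1).toNat : ℤ) := by
    have := Int.toNat_of_nonneg (by positivity : (0:ℤ) ≤ 2 * |t| + 1)
    omega
  omega

lemma btIndices_subset (t : ℤ) {n : ℕ} (h : 2 * |t| + 1 ≤ 3 ^ n) :
    btIndices t ⊆ Set.Iio n := by
  intro m hm
  by_contra hc
  exact hm (btDigit_eq_zero_of_big h (by simpa using hc))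

lemma btIndices_finite (t : ℤ) : (btIndices t).Finite := by
  obtain ⟨n, -, h⟩ := exists_pow_big t 0
  exact (Set.finite_Iio n).subset (btIndices_subset t h)

lemma recon (n : ℕ) (t : ℤ) :
    t = (∑ k ∈ Finset.range n, btDigit k t * 3 ^ k) + 3 ^ n * S^[n] t := by
  induction n with
  | zero => simp
  | succ n ih =>
      rw [Finset.sum_range_succ]
      have h1 : S^[n] t = 3 * S^[n+1] t + btDigit n t := by
        rw [Function.iterate_succ_apply', btDigit_iter]
        exact eq_three_S _
      calc t = (∑ k ∈ Finset.range n, btDigit k t * 3 ^ k) + 3 ^ n * S^[n] t := ih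
        _ = _ := by rw [h1]; ring

lemma eq_zero_of_digits_zero {t : ℤ} (h : ∀ n, btDigit n t = 0) : t = 0 := by
  obtain ⟨n, -, hn⟩ := exists_pow_big t 0
  have := recon n t
  rw [S_iter_eq_zero hn] at this
  simpa [h] using this

lemma btIndices_nonempty {t : ℤ} (h : t ≠ 0) : (btIndices t).Nonempty := by
  by_contra hc
  rw [Set.not_nonempty_iff_eq_empty] at hc
  exact h (eq_zero_of_digits_zero fun n => by
    by_contra hd
    exact absurd (hc ▸ hd : n ∈ (∅ : Set ℕ)) (Set.notMem_empty n))

lemma jmax_mem {t : ℤ} (h : t ≠ 0) : jmax t ∈ btIndices t :=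
  Set.Nonempty.csSup_mem (btIndices_nonempty h) (btIndices_finite t)

lemma le_jmax {t : ℤ} {n : ℕ} (hn : n ∈ btIndices t) : n ≤ jmax t :=
  le_csSup (btIndices_finite t).bddAbove hn

lemma digit_jmax_ne {t : ℤ} (h : t ≠ 0) : btDigit (jmax t) t ≠ 0 := jmax_mem h

lemma jmin_mem {t : ℤ} (h : t ≠ 0) : sInf (btIndices t) ∈ btIndices t :=
  Nat.sInf_mem (btIndices_nonempty h)

lemma geo (n : ℕ) : 2 * (∑ k ∈ Finset.range n, (3:ℤ) ^ k) + 1 = 3 ^ n := by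
  induction n with
  | zero => simp
  | succ n ih => rw [Finset.sum_range_succ, pow_succ]; ring_nf; ring_nf at ih; omega

lemma pos_of_jmax_digit {t : ℤ} (h : t ≠ 0) (hd : btDigit (jmax t) t = 1) : 0 < t := by
  set P := jmax t with hP
  have hvan : ∀ k, btDigit (P + 1 + k) t = 0 := by
    intro k
    by_contra hc
    have : P + 1 + k ∈ btIndices t := hc
    have := le_jmax this
    omega
  have hS1 : S^[P + 1] t = 0 := by
    apply eq_zero_of_digits_zero
    intro k
    rw [← btDigit_iter_add]
    exact hvan k
  have hSP : S^[P] t = 1 := by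
    have h1 : S^[P] t = 3 * S^[P+1] t + btDigit P t := by
      rw [Function.iterate_succ_apply', btDigit_iter]
      exact eq_three_S _
    rw [hS1, hd] at h1
    omega
  have hrec := recon P t
  rw [hSP, mul_one] at hrec
  have hbd : |∑ k ∈ Finset.range P, btDigit k t * 3 ^ k| ≤
      ∑ k ∈ Finset.range P, (3:ℤ) ^ k := by
    refine (Finset.abs_sum_le_sum_abs _ _).trans (Finset.sum_le_sum fun k _ => ?_)
    rw [abs_mul, abs_pow]
    have := btDigit_range k t
    have h1 : |btDigit k t| ≤ 1 := abs_le.2 ⟨this.1, this.2⟩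
    have h2 : |(3:ℤ)| ^ k = 3 ^ k := by norm_num
    nlinarith [pow_pos (by norm_num : (0:ℤ) < 3) k]
  have hg := geo P
  have := abs_le.1 hbd
  omega

lemma btDigit0_neg (t : ℤ) : btDigit 0 (-t) = -btDigit 0 t := by
  rw [btDigit_zero_fst, btDigit_zero_fst]; omega

lemma S_neg (t : ℤ) : S (-t) = -S t := by unfold S; omega

lemma S_iter_neg (n : ℕ) (t : ℤ) : S^[n] (-t) = -S^[n] t := by
  induction n generalizing t with
  | zero => simp
  | succ n ih => rw [Function.iterate_succ_apply, Function.iterate_succ_apply, S_neg, ih]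

lemma btDigit_neg (n : ℕ) (t : ℤ) : btDigit n (-t) = -btDigit n t := by
  rw [btDigit_iter n (-t), btDigit_iter n t, S_iter_neg, btDigit0_neg]

lemma btIndices_neg (t : ℤ) : btIndices (-t) = btIndices t := by
  ext n
  simp [btIndices, btDigit_neg]

lemma jmax_neg (t : ℤ) : jmax (-t) = jmax t := by rw [jmax, jmax, btIndices_neg]

lemma nextIdx_neg (t : ℤ) (i : ℕ) : nextIdx (-t) i = nextIdx t i := by
  rw [nextIdx, nextIdx, btIndices_neg]

lemma signChanges_neg (t : ℤ) : signChanges (-t) = signChanges t := by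
  unfold signChanges
  congr 1
  ext i
  simp only [Set.mem_setOf_eq, btIndices_neg, jmax_neg, nextIdx_neg, btDigit_neg]
  constructor
  · rintro ⟨h1, h2, h3⟩; exact ⟨h1, h2, fun hc => h3 (by rw [hc])⟩
  · rintro ⟨h1, h2, h3⟩; exact ⟨h1, h2, fun hc => h3 (by omega)⟩

def Zset (t : ℤ) : Set ℕ :=
  {i ∈ btIndices t | i < jmax t ∧ btDigit i t ≠ btDigit (nextIdx t i) t}

lemma signChanges_eq (t : ℤ) : signChanges t = (Zset t).ncard := rfl

lemma Zset_subset (t : ℤ) : Zset t ⊆ btIndices t := fun _ h => h.1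

lemma nextIdx_eq {t : ℤ} {i v : ℕ} (hv : v ∈ btIndices t) (hiv : i < v)
    (hmin : ∀ j ∈ btIndices t, i < j → v ≤ j) : nextIdx t i = v := by
  refine le_antisymm (Nat.sInf_le ⟨hv, hiv⟩) ?_
  have hne : ({j ∈ btIndices t | i < j} : Set ℕ).Nonempty := ⟨v, hv, hiv⟩
  have := Nat.sInf_mem hne
  exact hmin _ this.1 this.2

lemma ne_zero_of_digit {t : ℤ} {n : ℕ} (h : btDigit n t ≠ 0) : t ≠ 0 := by
  rintro rfl
  exact h (btDigit_of_zero n)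

lemma concat (t M : ℤ) (N : ℕ) (ht : t ≠ 0) (hM : M ≠ 0) (hb : 2 * |t| + 1 ≤ 3 ^ N) :
    t + 3 ^ N * M ≠ 0 ∧
    jmax (t + 3 ^ N * M) = N + jmax M ∧
    btDigit (jmax (t + 3 ^ N * M)) (t + 3 ^ N * M) = btDigit (jmax M) M ∧
    signChanges (t + 3 ^ N * M) = signChanges t + signChanges M +
      (if btDigit (jmax t) t = btDigit (sInf (btIndices M)) M then 0 else 1) := by
  set t' := t + 3 ^ N * M with ht'
  have hSt : S^[N] t = 0 := S_iter_eq_zero hb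
  have dlow : ∀ n, n < N → btDigit n t' = btDigit n t := fun n h => btDigit_add_pow_lt h t M
  have dhigh : ∀ k, btDigit (N + k) t' = btDigit k M := fun k => btDigit_add_pow_ge k N t M hSt
  have hvant : ∀ n, N ≤ n → btDigit n t = 0 := fun n hn => btDigit_eq_zero_of_big hb hn
  have hlow : ∀ n ∈ btIndices t, n < N := fun n hn => by
    by_contra hc; exact hn (hvant n (by omega))
  have hind : ∀ n, n ∈ btIndices t' ↔ (n ∈ btIndices t ∨ ∃ k ∈ btIndices M, n = N + k) := by
    intro n
    by_cases hn : n < N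
    · show btDigit n t' ≠ 0 ↔ _
      rw [dlow n hn]
      constructor
      · exact Or.inl
      · rintro (h | ⟨k, _, he⟩)
        · exact h
        · omega
    · obtain ⟨k, rfl⟩ : ∃ k, n = N + k := ⟨n - N, by omega⟩
      show btDigit (N + k) t' ≠ 0 ↔ _
      rw [dhigh k]
      constructor
      · intro h; exact Or.inr ⟨k, h, rfl⟩
      · rintro (h | ⟨k', hk', he⟩)
        · exact absurd (hvant _ (by omega)) h
        · have : k' = k := by omega
          exact this ▸ hk'
  have hjm : jmax M ∈ btIndices M := jmax_mem hM
  have hjt : jmax t ∈ btIndices t := jmax_mem ht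
  have hjtN : jmax t < N := hlow _ hjt
  have hi2 : sInf (btIndices M) ∈ btIndices M := jmin_mem hM
  have hne' : t' ≠ 0 := by
    apply ne_zero_of_digit (n := N + jmax M)
    rw [dhigh]
    exact digit_jmax_ne hM
  have hmemtop : N + jmax M ∈ btIndices t' := (hind _).2 (Or.inr ⟨jmax M, hjm, rfl⟩)
  have hjmax' : jmax t' = N + jmax M := by
    refine le_antisymm ?_ (le_jmax hmemtop)
    refine csSup_le (btIndices_nonempty hne') ?_
    intro j hj
    rcases (hind j).1 hj with hj | ⟨k, hk, rfl⟩
    · have := hlow _ hj; omega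
    · have := le_jmax hk; omega
  have htop : btDigit (jmax t') t' = btDigit (jmax M) M := by rw [hjmax', dhigh]
  refine ⟨hne', hjmax', htop, ?_⟩
  set Bd : Set ℕ := if btDigit (jmax t) t = btDigit (sInf (btIndices M)) M then ∅
    else {jmax t} with hBd
  have hBdmem : ∀ n, n ∈ Bd ↔
      (btDigit (jmax t) t ≠ btDigit (sInf (btIndices M)) M ∧ n = jmax t) := by
    intro n
    rw [hBd]
    by_cases hc : btDigit (jmax t) t = btDigit (sInf (btIndices M)) M <;> simp [hc] <;> omega
  have hZ : Zset t' = Zset t ∪ Bd ∪ {n | ∃ k ∈ Zset M, n = N + k} := by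
    ext i
    simp only [Set.mem_union, Set.mem_setOf_eq]
    by_cases hiN : i < N
    · by_cases hii : i ∈ btIndices t
      · have hile : i ≤ jmax t := le_jmax hii
        rcases lt_or_eq_of_le hile with hilt | hieq
        · -- i < jmax t : low interior
          have hne2 : ({j ∈ btIndices t | i < j} : Set ℕ).Nonempty := ⟨jmax t, hjt, hilt⟩
          have hm := Nat.sInf_mem hne2
          have hv1 : nextIdx t i ∈ btIndices t := hm.1
          have hv2 : i < nextIdx t i := hm.2
          have hv3 : ∀ j ∈ btIndices t, i < j → nextIdx t i ≤ j :=
            fun j hj hij => Nat.sInf_le ⟨hj, hij⟩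
          have hvN : nextIdx t i < N := hlow _ hv1
          have hnext : nextIdx t' i = nextIdx t i := by
            refine nextIdx_eq ((hind _).2 (Or.inl hv1)) hv2 ?_
            intro j hj hij
            rcases (hind j).1 hj with hj | ⟨k, _, rfl⟩
            · exact hv3 j hj hij
            · omega
          constructor
          · rintro ⟨h1, h2, h3⟩
            refine Or.inl (Or.inl ⟨hii, hilt, ?_⟩)
            rw [hnext, dlow i hiN, dlow _ hvN] at h3
            exact h3
          · rintro ((⟨h1, h2, h3⟩ | hbd) | ⟨k, hk, he⟩)
            · refine ⟨(hind _).2 (Or.inl hii), by rw [hjmax']; omega, ?_⟩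
              rw [hnext, dlow i hiN, dlow _ hvN]
              exact h3
            · exfalso
              have := ((hBdmem i).1 hbd).2
              omega
            · exfalso; omega
        · -- i = jmax t : boundary
          have hnext : nextIdx t' i = N + sInf (btIndices M) := by
            refine nextIdx_eq ((hind _).2 (Or.inr ⟨_, hi2, rfl⟩)) (by omega) ?_
            intro j hj hij
            rcases (hind j).1 hj with hj | ⟨k, hk, rfl⟩
            · have := le_jmax hj; omega
            · have := Nat.sInf_le hk; omega
          constructor
          · rintro ⟨h1, h2, h3⟩
            rw [hnext, dlow i hiN, dhigh, hieq] at h3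
            exact Or.inl (Or.inr ((hBdmem _).2 ⟨h3, hieq⟩))
          · rintro ((⟨h1, h2, h3⟩ | hbd) | ⟨k, hk, he⟩)
            · omega
            · have hc := ((hBdmem _).1 hbd).1
              refine ⟨(hind _).2 (Or.inl (by rw [hieq]; exact hjt)), by rw [hjmax']; omega, ?_⟩
              rw [hnext, dlow i hiN, dhigh, hieq]
              exact hc
            · exfalso
              have := Zset_subset M hk
              omega
      · -- i < N, not an index of t : nothing
        constructor
        · rintro ⟨h1, h2, h3⟩
          rcases (hind i).1 h1 with h1 | ⟨k, hk, he⟩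
          · exact absurd h1 hii
          · omega
        · rintro ((h | hbd) | ⟨k, hk, he⟩)
          · exact absurd h.1 hii
          · exact absurd (((hBdmem i).1 hbd).2 ▸ hjt) hii
          · omega
    · -- i ≥ N
      obtain ⟨k, rfl⟩ : ∃ k, i = N + k := ⟨i - N, by omega⟩
      have hik : N + k ∈ btIndices t' ↔ k ∈ btIndices M := by
        rw [hind]
        constructor
        · rintro (h | ⟨k', hk', he⟩)
          · have := hlow _ h; omega
          · have : k' = k := by omega
            exact this ▸ hk'
        · intro h; exact Or.inr ⟨k, h, rfl⟩
      by_cases hkM : k ∈ btIndices M ∧ k < jmax M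
      · obtain ⟨hk1, hk2⟩ := hkM
        have hne2 : ({j ∈ btIndices M | k < j} : Set ℕ).Nonempty := ⟨jmax M, hjm, hk2⟩
        have hm := Nat.sInf_mem hne2
        have hw1 : nextIdx M k ∈ btIndices M := hm.1
        have hw2 : k < nextIdx M k := hm.2
        have hw3 : ∀ j ∈ btIndices M, k < j → nextIdx M k ≤ j :=
          fun j hj hij => Nat.sInf_le ⟨hj, hij⟩
        have hnext : nextIdx t' (N + k) = N + nextIdx M k := by
          refine nextIdx_eq ((hind _).2 (Or.inr ⟨_, hw1, rfl⟩)) (by omega) ?_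
          intro j hj hij
          rcases (hind j).1 hj with hj | ⟨k', hk', rfl⟩
          · have := hlow _ hj; omega
          · have := hw3 k' hk' (by omega); omega
        constructor
        · rintro ⟨h1, h2, h3⟩
          refine Or.inr ⟨k, ⟨hk1, hk2, ?_⟩, rfl⟩
          rw [hnext, dhigh, dhigh] at h3
          exact h3
        · rintro ((h | hbd) | ⟨k', hk', he⟩)
          · have := hlow _ h.1; omega
          · have := ((hBdmem _).1 hbd).2; omega
          · have : k' = k := by omega
            subst this
            obtain ⟨h1, h2, h3⟩ := hk'
            refine ⟨hik.2 h1, by rw [hjmax']; omega, ?_⟩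
            rw [hnext, dhigh, dhigh]
            exact h3
      · constructor
        · rintro ⟨h1, h2, h3⟩
          exfalso
          rw [hjmax'] at h2
          exact hkM ⟨hik.1 h1, by omega⟩
        · rintro ((h | hbd) | ⟨k', hk', he⟩)
          · exfalso; have := hlow _ h.1; omega
          · exfalso; have := ((hBdmem _).1 hbd).2; omega
          · exfalso
            have : k' = k := by omega
            subst this
            exact hkM ⟨hk'.1, hk'.2.1⟩
  -- now count
  have himg : {n | ∃ k ∈ Zset M, n = N + k} = (fun k : ℕ => N + k) '' Zset M := by
    ext n
    simp only [Set.mem_setOf_eq, Set.mem_image]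
    constructor
    · rintro ⟨k, hk, rfl⟩; exact ⟨k, hk, rfl⟩
    · rintro ⟨k, hk, rfl⟩; exact ⟨k, hk, rfl⟩
  have hfin1 : (Zset t).Finite := (btIndices_finite t).subset (Zset_subset t)
  have hfinM : (Zset M).Finite := (btIndices_finite M).subset (Zset_subset M)
  have hfinBd : Bd.Finite := by
    rw [hBd]
    by_cases hc : btDigit (jmax t) t = btDigit (sInf (btIndices M)) M <;> simp [hc]
  have hinj : Function.Injective (fun k : ℕ => N + k) := by
    intro a b h
    have h' : N + a = N + b := h
    omega
  have hd1 : Disjoint (Zset t) Bd := by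
    rw [Set.disjoint_left]
    intro x hx hxB
    have h1 := ((hBdmem x).1 hxB).2
    have h2 := hx.2.1
    omega
  have hd2 : Disjoint (Zset t ∪ Bd) ((fun k : ℕ => N + k) '' Zset M) := by
    rw [Set.disjoint_left]
    rintro x hx ⟨k, hk, he⟩
    have he' : N + k = x := he
    rcases hx with hx | hx
    · have := hlow _ (Zset_subset t hx)
      omega
    · have := ((hBdmem _).1 hx).2
      omega
  have hcBd : Bd.ncard = if btDigit (jmax t) t = btDigit (sInf (btIndices M)) M then 0
      else 1 := by
    rw [hBd]
    by_cases hc : btDigit (jmax t) t = btDigit (sInf (btIndices M)) M <;> simp [hc]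
  rw [signChanges_eq t', signChanges_eq t, signChanges_eq M, hZ, himg,
    Set.ncard_union_eq hd2 (hfin1.union hfinBd) (hfinM.image _),
    Set.ncard_union_eq hd1 hfin1 hfinBd,
    Set.ncard_image_of_injective _ hinj, hcBd]
  by_cases hc : btDigit (jmax t) t = btDigit (sInf (btIndices M)) M <;> simp [hc] <;> omega

lemma sign_pm {t : ℤ} (h : t ≠ 0) :
    btDigit (jmax t) t = 1 ∨ btDigit (jmax t) t = -1 := by
  have h1 := digit_jmax_ne h
  have h2 := btDigit_range (jmax t) t
  omega

lemma firstD_pm {m : ℤ} (h : m ≠ 0) :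
    btDigit (sInf (btIndices m)) m = 1 ∨ btDigit (sInf (btIndices m)) m = -1 := by
  have h1 : btDigit (sInf (btIndices m)) m ≠ 0 := jmin_mem h
  have h2 := btDigit_range (sInf (btIndices m)) m
  omega

/-- the data of a block: sign-change count mod K, first digit, last digit -/
noncomputable def tripleOf (K : ℕ) (m : ℤ) : ZMod K × Bool × Bool :=
  ((signChanges m : ZMod K), decide (btDigit (sInf (btIndices m)) m = 1),
    decide (btDigit (jmax m) m = 1))

def aVal {K : ℕ} (τ : ZMod K × Bool × Bool) : ℤ := if τ.2.1 then 1 else -1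

def bVal {K : ℕ} (τ : ZMod K × Bool × Bool) : ℤ := if τ.2.2 then 1 else -1

lemma aVal_pm {K : ℕ} (τ : ZMod K × Bool × Bool) : aVal τ = 1 ∨ aVal τ = -1 := by
  unfold aVal; by_cases h : τ.2.1 <;> simp [h]

lemma bVal_pm {K : ℕ} (τ : ZMod K × Bool × Bool) : bVal τ = 1 ∨ bVal τ = -1 := by
  unfold bVal; by_cases h : τ.2.2 <;> simp [h]

lemma tripleOf_spec {K : ℕ} {m : ℤ} (h : m ≠ 0) {τ : ZMod K × Bool × Bool}
    (ht : tripleOf K m = τ) :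
    (signChanges m : ZMod K) = τ.1 ∧ btDigit (sInf (btIndices m)) m = aVal τ ∧
      btDigit (jmax m) m = bVal τ := by
  subst ht
  refine ⟨rfl, ?_, ?_⟩
  · unfold aVal tripleOf
    by_cases hc : btDigit (sInf (btIndices m)) m = 1
    · simp [hc]
    · have := firstD_pm h
      simp [hc]
      omega
  · unfold bVal tripleOf
    by_cases hc : btDigit (jmax m) m = 1
    · simp [hc]
    · have := sign_pm h
      simp [hc]
      omega

/-- a supply of τ-blocks avoiding `E` at scale `≥ L₀` -/
def Good (B : Set ℤ) (K : ℕ) (τ : ZMod K × Bool × Bool) (E : Finset ℤ) (L₀ : ℕ) : Prop :=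
  ∃ x ∈ B, ∃ y ∈ B, x ∉ E ∧ y ∉ E ∧ x ≠ y ∧
    ∃ L m, L₀ ≤ L ∧ m ≠ 0 ∧ x - y = 3 ^ L * m ∧ tripleOf K m = τ

lemma raw_supply {B : Set ℤ} (hB : B.Infinite) (E : Finset ℤ) (L : ℕ) :
    ∃ x ∈ B, ∃ y ∈ B, x ∉ E ∧ y ∉ E ∧ x ≠ y ∧ (3:ℤ) ^ L ∣ x - y := by
  haveI : NeZero (3 ^ L) := ⟨pow_ne_zero L (by norm_num)⟩
  have hB' : (B \ ↑E).Infinite := hB.diff E.finite_toSet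
  have hmaps : Set.MapsTo (fun n : ℤ => (n : ZMod (3 ^ L))) (B \ ↑E) Set.univ :=
    fun x _ => Set.mem_univ _
  obtain ⟨x, hx, y, hy, hxy, hf⟩ :=
    hB'.exists_ne_map_eq_of_mapsTo hmaps Set.finite_univ
  refine ⟨x, hx.1, y, hy.1, hx.2, hy.2, hxy, ?_⟩
  have h1 : ((x - y : ℤ) : ZMod (3 ^ L)) = 0 := by push_cast [hf]; ring
  have h2 := (ZMod.intCast_zmod_eq_zero_iff_dvd (x - y) (3 ^ L)).1 h1
  have h3 : ((3 ^ L : ℕ) : ℤ) = 3 ^ L := by push_cast; ring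
  rwa [h3] at h2

lemma supply {B : Set ℤ} (hB : B.Infinite) (K : ℕ) [NeZero K] :
    ∃ τ : ZMod K × Bool × Bool, ∀ (E : Finset ℤ) (L₀ : ℕ), Good B K τ E L₀ := by
  by_contra hc
  push_neg at hc
  choose E L hEL using hc
  classical
  set Estar : Finset ℤ := Finset.univ.biUnion E with hE
  set Lstar : ℕ := Finset.univ.sup L with hL
  obtain ⟨x, hx, y, hy, hxE, hyE, hxy, hdvd⟩ := raw_supply hB Estar Lstar
  obtain ⟨m, hm⟩ := hdvd
  have hm0 : m ≠ 0 := by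
    rintro rfl
    rw [mul_zero] at hm
    exact hxy (by omega)
  set τ := tripleOf K m with hτ
  apply hEL τ
  refine ⟨x, hx, y, hy, ?_, ?_, hxy, Lstar, m, ?_, hm0, hm, rfl⟩
  · intro h
    exact hxE (Finset.mem_biUnion.2 ⟨τ, Finset.mem_univ _, h⟩)
  · intro h
    exact hyE (Finset.mem_biUnion.2 ⟨τ, Finset.mem_univ _, h⟩)
  · exact Finset.le_sup (Finset.mem_univ τ)

lemma step {B : Set ℤ} (u : ℤ) {K : ℕ} {τ : ZMod K × Bool × Bool}
    (hsup : ∀ (E : Finset ℤ) (L₀ : ℕ), Good B K τ E L₀)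
    (t : ℤ) (F G : Finset ℤ) (hF : ↑F ⊆ B) (hG : ↑G ⊆ B)
    (hrep : t = u + (∑ v ∈ F, v) - ∑ v ∈ G, v) (ht : t ≠ 0)
    (ε : ℤ) (hε : ε = 1 ∨ ε = -1) :
    ∃ (t' : ℤ) (F' G' : Finset ℤ) (zm : ℕ), (↑F' : Set ℤ) ⊆ B ∧ (↑G' : Set ℤ) ⊆ B ∧
      (t' = u + (∑ v ∈ F', v) - ∑ v ∈ G', v) ∧ t' ≠ 0 ∧
      (zm : ZMod K) = τ.1 ∧
      signChanges t' = signChanges t + zm +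
        (if btDigit (jmax t) t = ε * aVal τ then 0 else 1) ∧
      btDigit (jmax t') t' = ε * bVal τ := by
  classical
  obtain ⟨L₀, hL₀1, hL₀2⟩ := exists_pow_big t 0
  obtain ⟨x, hxB, y, hyB, hxE, hyE, hxy, L, m, hLL, hm0, hxym, hτm⟩ :=
    hsup (F ∪ G) L₀
  have hb : 2 * |t| + 1 ≤ 3 ^ L := le_trans hL₀2 (pow_le_pow_right₀ (by norm_num) hLL)
  obtain ⟨hz, hfd, hld⟩ := tripleOf_spec hm0 hτm
  have hxF : x ∉ F := fun h => hxE (Finset.mem_union_left _ h)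
  have hxG : x ∉ G := fun h => hxE (Finset.mem_union_right _ h)
  have hyF : y ∉ F := fun h => hyE (Finset.mem_union_left _ h)
  have hyG : y ∉ G := fun h => hyE (Finset.mem_union_right _ h)
  rcases hε with rfl | rfl
  · -- ε = 1 : add x - y
    have hM0 : m ≠ 0 := hm0
    obtain ⟨hne, hjm, htopd, hcount⟩ := concat t m L ht hM0 hb
    refine ⟨t + 3 ^ L * m, insert x F, insert y G, signChanges m, ?_, ?_, ?_, hne, hz, ?_, ?_⟩
    · rw [Finset.coe_insert]
      exact Set.insert_subset hxB hF
    · rw [Finset.coe_insert]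
      exact Set.insert_subset hyB hG
    · rw [Finset.sum_insert hxF, Finset.sum_insert hyG, ← hxym, hrep]
      ring
    · rw [hcount, hfd, one_mul]
    · rw [htopd, hld, one_mul]
  · -- ε = -1 : add y - x
    have hM0 : -m ≠ 0 := neg_ne_zero.2 hm0
    obtain ⟨hne, hjm, htopd, hcount⟩ := concat t (-m) L ht hM0 hb
    have he : t + 3 ^ L * (-m) = t - (x - y) := by rw [hxym]; ring
    refine ⟨t + 3 ^ L * (-m), insert y F, insert x G, signChanges m, ?_, ?_, ?_, hne, hz, ?_, ?_⟩
    · rw [Finset.coe_insert]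
      exact Set.insert_subset hyB hF
    · rw [Finset.coe_insert]
      exact Set.insert_subset hxB hG
    · rw [he, Finset.sum_insert hyF, Finset.sum_insert hxG, hrep]
      ring
    · rw [hcount, signChanges_neg]
      congr 2
      rw [btIndices_neg, btDigit_neg, hfd]
      ring_nf
    · rw [htopd, jmax_neg, btDigit_neg, hld]
      ring

lemma run {B : Set ℤ} (u : ℤ) {K : ℕ} {τ : ZMod K × Bool × Bool}
    (hsup : ∀ (E : Finset ℤ) (L₀ : ℕ), Good B K τ E L₀) :
    ∀ (n d : ℕ), d ≤ n → ∀ (t : ℤ) (F G : Finset ℤ), (↑F : Set ℤ) ⊆ B → (↑G : Set ℤ) ⊆ B →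
      t = u + (∑ v ∈ F, v) - (∑ v ∈ G, v) → t ≠ 0 →
      ∃ (t' : ℤ) (F' G' : Finset ℤ), (↑F' : Set ℤ) ⊆ B ∧ (↑G' : Set ℤ) ⊆ B ∧
        (t' = u + (∑ v ∈ F', v) - ∑ v ∈ G', v) ∧ t' ≠ 0 ∧
        ((signChanges t' : ZMod K) = (signChanges t : ZMod K) + n * τ.1 + d) ∧
        btDigit (jmax t') t' = (aVal τ * bVal τ) ^ n * (-1) ^ d * btDigit (jmax t) t := by
  intro n
  induction n with
  | zero =>
      intro d hd t F G hF hG hrep ht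
      have hd0 : d = 0 := by omega
      subst hd0
      exact ⟨t, F, G, hF, hG, hrep, ht, by simp, by simp⟩
  | succ n ih =>
      intro d hd t F G hF hG hrep ht
      have hs := sign_pm ht
      set d₁ : ℕ := if d = n + 1 then 1 else 0 with hd₁def
      have hd01 : d₁ = 0 ∨ d₁ = 1 := by
        rw [hd₁def]; split <;> simp
      have hd₁d : d₁ ≤ d := by
        rw [hd₁def]; split <;> omega
      have hdd : d - d₁ ≤ n := by
        rw [hd₁def]; split <;> omega
      set σ : ℤ := if d₁ = 1 then -1 else 1 with hσdef
      set ε : ℤ := btDigit (jmax t) t * aVal τ * σ with hεdef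
      have hε : ε = 1 ∨ ε = -1 := by
        rcases hs with h1 | h1 <;> rcases aVal_pm τ with h2 | h2 <;>
          rcases hd01 with h0 | h0 <;>
          simp [hεdef, hσdef, h1, h2, h0]
      obtain ⟨t1, F1, G1, zm, hF1, hG1, hrep1, ht1, hzm, hcount, htop1⟩ :=
        step u hsup t F G hF hG hrep ht ε hε
      have hind : (if btDigit (jmax t) t = ε * aVal τ then 0 else 1) = d₁ := by
        rcases hs with h1 | h1 <;> rcases aVal_pm τ with h2 | h2 <;>
          rcases hd01 with h0 | h0 <;>
          simp [hεdef, hσdef, h1, h2, h0] <;> norm_num [h0]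
      obtain ⟨t', F', G', hF', hG', hrep', ht', hcast, htop⟩ :=
        ih (d - d₁) hdd t1 F1 G1 hF1 hG1 hrep1 ht1
      refine ⟨t', F', G', hF', hG', hrep', ht', ?_, ?_⟩
      · rw [hcast, hcount, hind]
        push_cast [Nat.cast_sub hd₁d]
        rw [hzm]
        ring
      · rw [htop, htop1]
        obtain ⟨e, he2⟩ : ∃ e, d = e + d₁ := ⟨d - d₁, by omega⟩
        have he : e + d₁ - d₁ = e := by omega
        rw [he2, he]
        rcases hd01 with h0 | h0 <;> rcases hs with h1 | h1 <;>
          rcases aVal_pm τ with h2 | h2 <;> rcases bVal_pm τ with h3 | h3 <;>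
          rw [h0] <;>
          simp [hεdef, hσdef, h0, h1, h2, h3, pow_add, pow_succ] <;> ring

end SC

theorem signChanges_surjective_mod_aux (A : Set ℤ) (hA : A ⊆ {n : ℤ | 0 < n})
    (htr : ∃ (B : Set ℤ) (u : ℤ), B ⊆ {n : ℤ | 0 < n} ∧ B.Infinite ∧
      posPart ((fun t => u + t) '' SIP B) ⊆ A)
    (K : ℕ) (hKpos : 0 < K) (hKodd : Odd K) :
    ∀ c : ZMod K, ∃ t ∈ A, ((signChanges t : ℤ) : ZMod K) = c := by
  obtain ⟨B, u, hBpos, hBinf, hsub⟩ := htr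
  haveI : NeZero K := ⟨hKpos.ne'⟩
  intro c
  obtain ⟨τ, hsup⟩ := SC.supply hBinf K
  have hinit : ∃ (t₀ : ℤ) (F₀ G₀ : Finset ℤ), (↑F₀ : Set ℤ) ⊆ B ∧ (↑G₀ : Set ℤ) ⊆ B ∧
      t₀ = u + (∑ v ∈ F₀, v) - (∑ v ∈ G₀, v) ∧ t₀ ≠ 0 := by
    by_cases hu : u = 0
    · obtain ⟨x, hxB, y, hyB, -, -, hxy, -⟩ := hsup ∅ 0
      exact ⟨x - y, {x}, {y}, by simpa using hxB, by simpa using hyB,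
        by simp [hu], sub_ne_zero.2 hxy⟩
    · exact ⟨u, ∅, ∅, by simp, by simp, by simp, hu⟩
  obtain ⟨t₀, F₀, G₀, hF₀, hG₀, hrep₀, ht₀⟩ := hinit
  have hs₀ := SC.sign_pm ht₀
  set δ : ℕ := if btDigit (jmax t₀) t₀ = 1 then 0 else 1 with hδdef
  have hδ01 : δ = 0 ∨ δ = 1 := by rw [hδdef]; split <;> simp
  have hcop : Nat.Coprime 2 K := by
    have h2 : ¬ 2 ∣ K := by
      have := Nat.odd_iff.mp hKodd
      omega
    exact (Nat.Prime.coprime_iff_not_dvd Nat.prime_two).mpr h2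
  set e2 : (ZMod K)ˣ := ZMod.unitOfCoprime 2 hcop with he2def
  set w : ZMod K := (c - (signChanges t₀ : ZMod K) - (δ : ZMod K)) * ↑e2⁻¹ with hwdef
  set j : ℕ := w.val with hjdef
  have hjlt : j < K := ZMod.val_lt w
  set d : ℕ := δ + 2 * j with hddef
  have hdle : d ≤ 2 * K := by omega
  obtain ⟨t', F', G', hF', hG', hrep', ht', hcast, htop⟩ :=
    SC.run u hsup (2 * K) d hdle t₀ F₀ G₀ hF₀ hG₀ hrep₀ ht₀
  have hab1 : (SC.aVal τ * SC.bVal τ) ^ (2 * K) = 1 := by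
    rcases SC.aVal_pm τ with h1 | h1 <;> rcases SC.bVal_pm τ with h2 | h2 <;>
      rw [h1, h2] <;> rw [pow_mul] <;> norm_num
  have hd2 : ((-1 : ℤ)) ^ d = (-1 : ℤ) ^ δ := by
    rw [hddef, pow_add, pow_mul]
    norm_num
  have htop1 : btDigit (jmax t') t' = 1 := by
    rw [htop, hab1, hd2, one_mul]
    rcases hs₀ with h1 | h1 <;> rw [h1] <;> rcases hδ01 with h0 | h0
    · rw [h0]; norm_num
    · exfalso
      rw [hδdef] at h0
      rw [h1] at h0
      simp at h0
    · exfalso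
      rw [hδdef] at h0
      rw [h1] at h0
      norm_num at h0
    · rw [h0]; norm_num
  have hpos : 0 < t' := SC.pos_of_jmax_digit ht' htop1
  have hmem : t' ∈ A := by
    apply hsub
    refine ⟨⟨(∑ v ∈ F', v) - (∑ v ∈ G', v), ?_, ?_⟩, hpos⟩
    · exact ⟨(∑ v ∈ F', v), ⟨F', hF', rfl⟩, (∑ v ∈ G', v), ⟨G', hG', rfl⟩, rfl⟩
    · rw [hrep']; ring
  refine ⟨t', hmem, ?_⟩
  have hK0 : ((2 * K : ℕ) : ZMod K) = 0 := by
    push_cast [ZMod.natCast_self]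
    ring
  have hj : ((j : ℕ) : ZMod K) = w := by
    rw [hjdef, ZMod.natCast_val, ZMod.cast_id]
  have h2w : (2 : ZMod K) * w = c - (signChanges t₀ : ZMod K) - (δ : ZMod K) := by
    have he2 : ((e2 : (ZMod K)ˣ) : ZMod K) = 2 := by
      rw [he2def, ZMod.coe_unitOfCoprime]
      norm_num
    have hmi : ((e2 : (ZMod K)ˣ) : ZMod K) * ((e2⁻¹ : (ZMod K)ˣ) : ZMod K) = 1 :=
      e2.mul_inv
    rw [hwdef, ← he2]
    calc ((e2 : (ZMod K)ˣ) : ZMod K) * ((c - (signChanges t₀ : ZMod K) - (δ : ZMod K)) * ↑e2⁻¹)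
        = (c - (signChanges t₀ : ZMod K) - (δ : ZMod K)) * (((e2 : (ZMod K)ˣ) : ZMod K) * ↑e2⁻¹) := by ring
      _ = _ := by rw [hmi, mul_one]
  have : ((signChanges t' : ℕ) : ZMod K) = c := by
    rw [hcast, hK0, hddef]
    push_cast
    rw [hj]
    have := h2w
    push_cast at this ⊢
    linear_combination this
  push_cast at this ⊢
  exact this


/-- if `A ⊆ ℕ` is a translate of an SIP set, then for every odd
positive `K` the map `t ↦ z(t) mod K` is surjective from `A` onto `ℤ/Kℤ`. -/
theorem signChanges_surjective_mod (A : Set ℤ) (hA : A ⊆ {n : ℤ | 0 < n})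
    (htr : ∃ (B : Set ℤ) (u : ℤ), B ⊆ {n : ℤ | 0 < n} ∧ B.Infinite ∧
      posPart ((fun t => u + t) '' SIP B) ⊆ A)
    (K : ℕ) (hKpos : 0 < K) (hKodd : Odd K) :
    ∀ c : ZMod K, ∃ t ∈ A, ((signChanges t : ℤ) : ZMod K) = c :=
  signChanges_surjective_mod_aux A hA htr K hKpos hKodd
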